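/- Ivory's identity: for every real x with 0 ≤ x ≤ 1, (1/π)·∫₀^π √(1 + 2√x·cos(2φ) + x) dφ = ∑_{n=0}^∞ ((1/(2n−1))·(1/4ⁿ)·C(2n,n))²·xⁿ. -/

import Mathlib

open Real MeasureTheory

noncomputable def iv : ℕ → ℝ
  | 0 => 1
  | (n+1) => (-1)^n * catalan n / 2^(2*n+1)

lemma iv_zero : iv 0 = 1 := rfl
lemma iv_succ (n : ℕ) : iv (n+1) = (-1)^n * catalan n / 2^(2*n+1) := rfl

lemma cb_sq_bound (n : ℕ) : ((Nat.centralBinom n : ℝ))^2 * (n+1) ≤ 16^n := by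
  induction n with
  | zero => simp [Nat.centralBinom]
  | succ n ih =>
    have key : ((n:ℝ)+1) * Nat.centralBinom (n+1) = 2*(2*n+1) * Nat.centralBinom n := by
      exact_mod_cast Nat.succ_mul_centralBinom_succ n
    have h1 : ((n:ℝ)+1)^2 * (Nat.centralBinom (n+1):ℝ)^2
        = 4*(2*(n:ℝ)+1)^2 * (Nat.centralBinom n:ℝ)^2 := by
      have := congrArg (·^2) key
      nlinarith [this]
    have hpos : (0:ℝ) < ((n:ℝ)+1)^3 := by positivity
    have hcbnn : (0:ℝ) ≤ (Nat.centralBinom n:ℝ)^2 := sq_nonneg _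
    rw [← mul_le_mul_iff_right₀ hpos]
    calc ((n:ℝ)+1)^3 * ((Nat.centralBinom (n+1):ℝ)^2 * ((n+1:ℕ)+1))
        = 4*(2*(n:ℝ)+1)^2 * ((n:ℝ)+2) * ((Nat.centralBinom n:ℝ)^2 * ((n:ℝ)+1)) := by
          push_cast
          nlinarith [h1]
      _ ≤ 4*(2*(n:ℝ)+1)^2 * ((n:ℝ)+2) * 16^n := by
          have hfac : (0:ℝ) ≤ 4*(2*(n:ℝ)+1)^2 * ((n:ℝ)+2) := by positivity
          exact mul_le_mul_of_nonneg_left ih hfac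
      _ ≤ ((n:ℝ)+1)^3 * 16^(n+1) := by
          have h16 : (0:ℝ) < 16^n := by positivity
          have : 4*(2*(n:ℝ)+1)^2 * ((n:ℝ)+2) ≤ 16 * ((n:ℝ)+1)^3 := by nlinarith
          calc 4*(2*(n:ℝ)+1)^2 * ((n:ℝ)+2) * 16^n ≤ 16 * ((n:ℝ)+1)^3 * 16^n :=
                mul_le_mul_of_nonneg_right this h16.le
            _ = ((n:ℝ)+1)^3 * 16^(n+1) := by ring

lemma catalan_real (n : ℕ) : (catalan n : ℝ) = (Nat.centralBinom n : ℝ) / ((n:ℝ)+1) := by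
  have h : ((n:ℝ)+1) * (catalan n : ℝ) = (Nat.centralBinom n : ℝ) := by
    exact_mod_cast succ_mul_catalan_eq_centralBinom n
  field_simp [← h]
  linarith

lemma cb_bound (n : ℕ) : (Nat.centralBinom n : ℝ) ≤ 4^n / Real.sqrt ((n:ℝ)+1) := by
  have h1 : (0:ℝ) < (n:ℝ)+1 := by positivity
  have hs : (0:ℝ) < Real.sqrt ((n:ℝ)+1) := Real.sqrt_pos.mpr h1
  have hsq : ((Nat.centralBinom n : ℝ))^2 ≤ (4^n / Real.sqrt ((n:ℝ)+1))^2 := by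
    rw [div_pow, Real.sq_sqrt h1.le, div_eq_mul_inv, ← pow_mul]
    rw [show (4:ℝ)^(n*2) = 16^n by rw [mul_comm, pow_mul]; norm_num]
    rw [← mul_le_mul_iff_left₀ h1, mul_assoc, inv_mul_cancel₀ h1.ne', mul_one]
    exact cb_sq_bound n
  have := Real.sqrt_le_sqrt hsq
  rwa [Real.sqrt_sq (by positivity), Real.sqrt_sq (by positivity)] at this

lemma iv_abs_le (n : ℕ) : |iv (n+1)| ≤ (1/2) * (1 / (((n:ℝ)+1) * Real.sqrt ((n:ℝ)+1))) := by
  rw [iv_succ, abs_div, abs_mul, abs_pow, abs_neg, abs_one, one_pow, one_mul]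
  have h1 : (0:ℝ) < (n:ℝ)+1 := by positivity
  have hs : (0:ℝ) < Real.sqrt ((n:ℝ)+1) := Real.sqrt_pos.mpr h1
  have h2 : |(catalan n : ℝ)| = (Nat.centralBinom n : ℝ) / ((n:ℝ)+1) := by
    rw [abs_of_nonneg (by positivity), catalan_real]
  have h3 : |(2:ℝ)^(2*n+1)| = 2 * 4^n := by
    rw [abs_of_nonneg (by positivity), pow_succ, pow_mul]
    norm_num; ring
  rw [h2, h3, div_div, div_le_iff₀ (by positivity)]
  calc (Nat.centralBinom n : ℝ) ≤ 4^n / Real.sqrt ((n:ℝ)+1) := cb_bound n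
    _ = 1/2 * (1/(((n:ℝ)+1) * Real.sqrt ((n:ℝ)+1))) * (((n:ℝ)+1) * (2*4^n)) := by
        field_simp

lemma iv_summable : Summable (fun n => |iv n|) := by
  rw [← summable_nat_add_iff 1]
  have hbase : Summable (fun n : ℕ => 1/2 * (1 / ((n:ℝ)+1)^(3/2:ℝ))) := by
    have := (Real.summable_one_div_nat_rpow (p := (3/2:ℝ))).mpr (by norm_num)
    have h2 := (summable_nat_add_iff (f := fun n : ℕ => 1 / ((n:ℝ))^(3/2:ℝ)) 1).mpr this
    have h3 : Summable (fun n : ℕ => 1 / ((n:ℝ)+1)^(3/2:ℝ)) := by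
      apply h2.congr; intro n; push_cast; rfl
    exact h3.mul_left _
  apply Summable.of_nonneg_of_le (fun n => abs_nonneg _) _ hbase
  intro n
  have h1 : (0:ℝ) < (n:ℝ)+1 := by positivity
  have hrw : ((n:ℝ)+1)^(3/2:ℝ) = ((n:ℝ)+1) * Real.sqrt ((n:ℝ)+1) := by
    rw [show (3/2:ℝ) = 1 + 1/2 by norm_num, Real.rpow_add h1, Real.rpow_one,
      Real.sqrt_eq_rpow]
  calc |iv (n+1)| ≤ 1/2 * (1/(((n:ℝ)+1) * Real.sqrt ((n:ℝ)+1))) := iv_abs_le n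
    _ = 1/2 * (1/((n:ℝ)+1)^(3/2:ℝ)) := by rw [hrw]

lemma iv_conv (n : ℕ) : ∑ k ∈ Finset.range (n+1), iv k * iv (n-k) = if n ≤ 1 then 1 else 0 := by
  match n with
  | 0 => simp [iv_zero]
  | 1 => simp [Finset.sum_range_succ, iv_zero, iv_succ]; norm_num
  | (m+2) =>
    rw [Finset.sum_range_succ, Finset.sum_range_succ']
    have key : ∀ i ∈ Finset.range (m+1),
        iv (i+1) * iv (m+2-(i+1)) = ((-1:ℝ)^m / 2^(2*m+2)) * ((catalan i : ℝ) * catalan (m-i)) := by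
      intro i hi
      have him : i ≤ m := Nat.lt_succ_iff.mp (Finset.mem_range.mp hi)
      have h2 : m+2-(i+1) = (m-i)+1 := by omega
      rw [h2, iv_succ, iv_succ, div_mul_div_comm]
      have hs : (-1:ℝ)^i * (-1)^(m-i) = (-1)^m := by rw [← pow_add]; congr 1; omega
      have hp : (2:ℝ)^(2*i+1) * 2^(2*(m-i)+1) = 2^(2*m+2) := by rw [← pow_add]; congr 1; omega
      rw [show ((-1:ℝ)^i * (catalan i:ℝ)) * ((-1:ℝ)^(m-i) * (catalan (m-i):ℝ))
          = ((-1:ℝ)^i * (-1)^(m-i)) * ((catalan i:ℝ) * (catalan (m-i):ℝ)) by ring, hs, hp]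
      ring
    rw [Finset.sum_congr rfl key, ← Finset.mul_sum]
    have hcat : ∑ i ∈ Finset.range (m+1), ((catalan i : ℝ) * (catalan (m-i) : ℝ))
        = (catalan (m+1) : ℝ) := by
      rw [catalan_succ]
      push_cast [Fin.sum_univ_eq_sum_range (fun i => (catalan i : ℝ) * (catalan (m-i) : ℝ)) (m+1)]
      rfl
    rw [hcat, Nat.sub_self, Nat.sub_zero, iv_zero]
    have hiv2 : iv (m+2) = (-1)^(m+1) * catalan (m+1) / 2^(2*(m+1)+1) := iv_succ (m+1)
    rw [hiv2]
    have : ¬ (m+1+1 ≤ 1) := by omega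
    rw [if_neg this]
    have ht : (0:ℝ) < 2^m := by positivity
    have hpow1 : (2:ℝ)^(2*(m+1)+1) = 8 * (2^m)^2 := by
      rw [← pow_mul, show (2*(m+1)+1) = 2*m+3 by ring, show 2*m+3 = m*2+3 by ring, pow_add, pow_mul]
      norm_num
      try ring
    have hpow2 : (2:ℝ)^(2*m+2) = 4 * (2^m)^2 := by
      rw [← pow_mul, show (2*m+2) = m*2+2 by ring, pow_add, pow_mul]
      norm_num
      try ring
    have hsgn : (-1:ℝ)^(m+1) = -(-1:ℝ)^m := by rw [pow_succ]; ring
    rw [hpow1, hpow2, hsgn]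
    rcases Nat.even_or_odd m with h | h
    · rw [h.neg_one_pow]; field_simp; ring
    · rw [h.neg_one_pow]; field_simp; ring

lemma iv_coeff (n : ℕ) :
    ((1 / (2 * (n : ℝ) - 1)) * (1 / 4 ^ n) * (Nat.choose (2 * n) n)) ^ 2 = (iv n)^2 := by
  match n with
  | 0 => norm_num [iv_zero]
  | (m+1) =>
    have hcb : Nat.centralBinom (m+1) = 2*(2*m+1) * catalan m := by
      have h1 := Nat.succ_mul_centralBinom_succ m
      have h2 := succ_mul_catalan_eq_centralBinom m
      have : (m+1) * Nat.centralBinom (m+1) = (m+1) * (2*(2*m+1) * catalan m) := by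
        rw [h1, ← h2]; ring
      exact Nat.eq_of_mul_eq_mul_left (Nat.succ_pos m) this
    have hch : Nat.choose (2*(m+1)) (m+1) = Nat.centralBinom (m+1) := rfl
    rw [hch, hcb, iv_succ]
    have ht : (0:ℝ) < 2^m := by positivity
    have hpow1 : (2:ℝ)^(2*m+1) = 2 * (2^m)^2 := by
      rw [← pow_mul, show (2*m+1) = m*2+1 by ring, pow_add, pow_mul]
      norm_num
      try ring
    have hpow2 : (4:ℝ)^(m+1) = 4 * (2^m)^2 := by
      rw [show (4:ℝ) = 2^2 by norm_num, ← pow_mul, show 2*(m+1) = m*2+2 by ring, pow_add, pow_mul]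
      norm_num
      try ring
    have hne : 2*((m:ℝ)+1) - 1 = 2*(m:ℝ)+1 := by ring
    have h1 : (2*(m:ℝ)+1) ≠ 0 := by positivity
    push_cast
    rw [hne, hpow1, hpow2]
    rcases Nat.even_or_odd m with h | h
    · rw [h.neg_one_pow]; field_simp; ring
    · rw [h.neg_one_pow]; field_simp; ring

lemma iv_term_norm_le (n : ℕ) (z : ℂ) (hz : ‖z‖ ≤ 1) : ‖(iv n : ℂ) * z^n‖ ≤ |iv n| := by
  rw [norm_mul, norm_pow, Complex.norm_real]
  exact mul_le_of_le_one_right (abs_nonneg _) (pow_le_one₀ (norm_nonneg _) hz)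

lemma iv_series_summable (z : ℂ) (hz : ‖z‖ ≤ 1) :
    Summable (fun n => ‖(iv n : ℂ) * z^n‖) :=
  Summable.of_nonneg_of_le (fun _ => norm_nonneg _) (fun n => iv_term_norm_le n z hz) iv_summable

lemma iv_sq (z : ℂ) (hz : ‖z‖ ≤ 1) :
    (∑' n, (iv n : ℂ) * z^n) * (∑' n, (iv n : ℂ) * z^n) = 1 + z := by
  have hs := iv_series_summable z hz
  rw [tsum_mul_tsum_eq_tsum_sum_range_of_summable_norm hs hs]
  have hterm : ∀ n : ℕ,
      (∑ k ∈ Finset.range (n+1), ((iv k:ℂ) * z^k) * ((iv (n-k):ℂ) * z^(n-k)))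
        = (if n ≤ 1 then z^n else 0) := by
    intro n
    have h1 : ∀ k ∈ Finset.range (n+1),
        ((iv k:ℂ) * z^k) * ((iv (n-k):ℂ) * z^(n-k)) = ((iv k * iv (n-k) : ℝ) : ℂ) * z^n := by
      intro k hk
      have hkn : k ≤ n := Nat.lt_succ_iff.mp (Finset.mem_range.mp hk)
      rw [show ((iv k:ℂ) * z^k) * ((iv (n-k):ℂ) * z^(n-k))
          = ((iv k:ℂ) * (iv (n-k):ℂ)) * (z^k * z^(n-k)) from by ring,
        ← pow_add, Nat.add_sub_cancel' hkn]
      push_cast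
      ring
    rw [Finset.sum_congr rfl h1, ← Finset.sum_mul, ← Complex.ofReal_sum, iv_conv n]
    split_ifs <;> simp
  rw [tsum_congr hterm, tsum_eq_sum (s := Finset.range 2) (by intro n hn; simp at hn; rw [if_neg (by omega)])]
  rw [Finset.sum_range_succ, Finset.sum_range_succ]
  norm_num

lemma ivory_aux (y : ℝ) (hy0 : 0 ≤ y) (hy1 : y ≤ 1) :
    ∫ φ in (0:ℝ)..π, Real.sqrt (1 + 2*y*Real.cos (2*φ) + y^2)
      = π * ∑' n : ℕ, (iv n)^2 * y^(2*n) := by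
  have h0pi : (0:ℝ) ≤ π := pi_pos.le
  set z : ℝ → ℂ := fun φ => (y:ℂ) * Complex.exp (2*Complex.I*φ) with hzdef
  have hznorm : ∀ φ : ℝ, ‖z φ‖ = y := by
    intro φ
    have : (2*Complex.I*(φ:ℂ)) = ((2*φ:ℝ):ℂ) * Complex.I := by push_cast; ring
    rw [hzdef]
    simp only [norm_mul, this, Complex.norm_exp_ofReal_mul_I,
      Complex.norm_real, Real.norm_eq_abs, abs_of_nonneg hy0, mul_one]
  have hznorm1 : ∀ φ : ℝ, ‖z φ‖ ≤ 1 := fun φ => by rw [hznorm]; exact hy1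
  set F : ℕ × ℕ → ℝ → ℂ := fun p φ =>
    ((iv p.1 * iv p.2 * y^(p.1+p.2) : ℝ):ℂ)
      * Complex.exp (2*Complex.I*((p.1:ℂ)-(p.2:ℂ)) * φ) with hFdef
  -- pointwise identity
  have hpt : ∀ φ : ℝ, ((Real.sqrt (1 + 2*y*Real.cos (2*φ) + y^2) : ℝ) : ℂ)
      = ∑' p : ℕ × ℕ, F p φ := by
    intro φ
    have hexp : Complex.exp (2*Complex.I*(φ:ℂ)) = ((Real.cos (2*φ) : ℝ) : ℂ) + ((Real.sin (2*φ):ℝ):ℂ) * Complex.I := by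
      rw [show (2*Complex.I*(φ:ℂ)) = ((2*φ:ℝ):ℂ) * Complex.I by push_cast; ring,
        Complex.exp_mul_I, ← Complex.ofReal_cos, ← Complex.ofReal_sin]
    have habs : Real.sqrt (1 + 2*y*Real.cos (2*φ) + y^2) = ‖1 + z φ‖ := by
      rw [Complex.norm_def]
      congr 1
      rw [hzdef]
      simp only [hexp]
      rw [Complex.normSq_apply]
      simp only [Complex.add_re, Complex.add_im, Complex.mul_re, Complex.mul_im,
        Complex.ofReal_re, Complex.ofReal_im, Complex.I_re, Complex.I_im, Complex.one_re,
        Complex.one_im]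
      have := Real.sin_sq_add_cos_sq (2*φ)
      nlinarith [this]
    have hP2 : (‖∑' n, (iv n : ℂ) * (z φ)^n‖)^2 = ‖1 + z φ‖ := by
      rw [sq, ← norm_mul, iv_sq _ (hznorm1 φ)]
    have hconj : (starRingEnd ℂ) (∑' n, (iv n : ℂ) * (z φ)^n)
        = ∑' n, (iv n : ℂ) * ((starRingEnd ℂ) (z φ))^n := by
      rw [show (starRingEnd ℂ) (∑' n, (iv n : ℂ) * (z φ)^n)
          = star (∑' n, (iv n : ℂ) * (z φ)^n) from rfl, tsum_star]
      exact tsum_congr fun n => by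
        simp only [star_mul', star_pow, Complex.star_def, Complex.conj_ofReal]
        try ring
    have hmc : (∑' n, (iv n : ℂ) * (z φ)^n) * (starRingEnd ℂ) (∑' n, (iv n : ℂ) * (z φ)^n)
        = ∑' p : ℕ × ℕ, F p φ := by
      rw [hconj]
      have hs1 := iv_series_summable (z φ) (hznorm1 φ)
      have hs2 : Summable (fun n => ‖(iv n : ℂ) * ((starRingEnd ℂ) (z φ))^n‖) := by
        apply iv_series_summable
        rw [RCLike.norm_conj]; exact hznorm1 φ
      rw [tsum_mul_tsum_of_summable_norm hs1 hs2]
      apply tsum_congr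
      rintro ⟨m, n⟩
      have hconjz : (starRingEnd ℂ) (z φ) = (y:ℂ) * Complex.exp (-(2*Complex.I*(φ:ℂ))) := by
        rw [hzdef]
        simp only
        rw [map_mul, Complex.conj_ofReal, ← Complex.exp_conj]
        congr 1
        simp only [map_mul, map_ofNat, Complex.conj_I, Complex.conj_ofReal]
        ring
      have hexp2 : Complex.exp ((m:ℂ) * (2*Complex.I*(φ:ℂ))) * Complex.exp ((n:ℂ) * -(2*Complex.I*(φ:ℂ)))
          = Complex.exp (2*Complex.I*((m:ℂ)-(n:ℂ)) * (φ:ℂ)) := by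
        rw [← Complex.exp_add]; congr 1; ring
      rw [hconjz, hzdef, hFdef]
      simp only
      rw [mul_pow, mul_pow, ← Complex.exp_nat_mul, ← Complex.exp_nat_mul]
      rw [show ((iv m:ℂ) * ((y:ℂ)^m * Complex.exp ((m:ℂ) * (2*Complex.I*(φ:ℂ)))))
            * ((iv n:ℂ) * ((y:ℂ)^n * Complex.exp ((n:ℂ) * -(2*Complex.I*(φ:ℂ)))))
          = ((iv m:ℂ)*(iv n:ℂ)*((y:ℂ)^m*(y:ℂ)^n))
            * (Complex.exp ((m:ℂ) * (2*Complex.I*(φ:ℂ))) * Complex.exp ((n:ℂ) * -(2*Complex.I*(φ:ℂ)))) from by ring,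
        hexp2]
      push_cast
      ring
    calc ((Real.sqrt (1 + 2*y*Real.cos (2*φ) + y^2) : ℝ) : ℂ)
        = ((‖∑' n, (iv n : ℂ) * (z φ)^n‖^2 : ℝ) : ℂ) := by rw [habs, ← hP2]
      _ = ∑' p : ℕ × ℕ, F p φ := by
          rw [← hmc, ← Complex.normSq_eq_norm_sq, Complex.mul_conj]
  -- integrability and summability of integrals
  have hFint : ∀ p : ℕ × ℕ, Integrable (F p) (volume.restrict (Set.Ioc (0:ℝ) π)) := by
    rintro ⟨m, n⟩
    apply Continuous.integrableOn_Ioc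
    exact continuous_const.mul (Complex.continuous_exp.comp (continuous_const.mul Complex.continuous_ofReal))
  have hFnorm : ∀ (p : ℕ × ℕ) (φ : ℝ), ‖F p φ‖ = |iv p.1| * y^p.1 * (|iv p.2| * y^p.2) := by
    rintro ⟨m, n⟩ φ
    have harg : (2*Complex.I*((m:ℂ)-(n:ℂ)) * φ) = ((2*φ*((m:ℝ)-n) : ℝ):ℂ) * Complex.I := by
      push_cast; ring
    rw [hFdef]
    simp only [norm_mul, harg, Complex.norm_exp_ofReal_mul_I,
      Complex.norm_real, Real.norm_eq_abs, mul_one]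
    rw [abs_of_nonneg (pow_nonneg hy0 _), pow_add]
    ring
  have hFintegralnorm : ∀ p : ℕ × ℕ,
      (∫ φ in Set.Ioc (0:ℝ) π, ‖F p φ‖) = |iv p.1| * y^p.1 * (|iv p.2| * y^p.2) * π := by
    intro p
    rw [setIntegral_congr_fun measurableSet_Ioc (fun φ _ => hFnorm p φ)]
    rw [setIntegral_const]
    simp [Real.volume_Ioc, h0pi, mul_comm]
  have hbase : Summable (fun n => |iv n| * y^n) := by
    apply Summable.of_nonneg_of_le (fun n => by positivity) _ iv_summable
    intro n
    exact mul_le_of_le_one_right (abs_nonneg _) (pow_le_one₀ hy0 hy1)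
  have hsumint : Summable (fun p : ℕ × ℕ => ∫ φ in Set.Ioc (0:ℝ) π, ‖F p φ‖) := by
    apply Summable.congr _ (fun p => (hFintegralnorm p).symm)
    exact (Summable.mul_of_nonneg hbase hbase (fun n => by positivity)
      (fun n => by positivity)).mul_right π
  have hswap := hasSum_integral_of_summable_integral_norm (μ := volume.restrict (Set.Ioc (0:ℝ) π))
    hFint hsumint
  -- value of each integral
  have hIF : ∀ p : ℕ × ℕ, (∫ φ in Set.Ioc (0:ℝ) π, F p φ)
      = if p.2 = p.1 then ((π * ((iv p.1)^2 * y^(2*p.1)) : ℝ):ℂ) else 0 := by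
    rintro ⟨m, n⟩
    rw [← intervalIntegral.integral_of_le h0pi]
    by_cases h : (n : ℕ) = m
    · subst h
      simp only [hFdef, sub_self, mul_zero, zero_mul, Complex.exp_zero, mul_one]
      rw [intervalIntegral.integral_const, sub_zero, Complex.real_smul]
      simp only [if_true]
      push_cast
      ring
    · rw [if_neg h]
      have hd : (2*Complex.I*((m:ℂ)-(n:ℂ))) ≠ 0 := by
        apply mul_ne_zero (by simp [Complex.I_ne_zero])
        rw [sub_ne_zero]
        exact_mod_cast Ne.symm h
      rw [hFdef]
      simp only
      rw [intervalIntegral.integral_const_mul, integral_exp_mul_complex hd]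
      have h1 : (2*Complex.I*((m:ℂ)-(n:ℂ))) * (π:ℂ) = ((m:ℤ)-(n:ℤ) : ℤ) * (2*(π:ℂ)*Complex.I) := by
        push_cast; ring
      rw [Complex.ofReal_zero, mul_zero, Complex.exp_zero, h1,
        Complex.exp_int_mul_two_pi_mul_I, sub_self, zero_div, mul_zero]
  -- assemble
  have hsummF : Summable (fun p : ℕ × ℕ => ∫ φ in Set.Ioc (0:ℝ) π, F p φ) := ⟨_, hswap⟩
  have hkey : ((∫ φ in (0:ℝ)..π, Real.sqrt (1 + 2*y*Real.cos (2*φ) + y^2)) : ℂ)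
      = ∑' p : ℕ × ℕ, ∫ φ in Set.Ioc (0:ℝ) π, F p φ := by
    rw [intervalIntegral.integral_congr
      (fun φ _ => hpt φ), intervalIntegral.integral_of_le h0pi, hswap.tsum_eq]
  rw [Summable.tsum_prod hsummF] at hkey
  have hdiag : ∀ m : ℕ, (∑' n : ℕ, ∫ φ in Set.Ioc (0:ℝ) π, F (m, n) φ)
      = ((π * ((iv m)^2 * y^(2*m)) : ℝ):ℂ) := by
    intro m
    rw [tsum_congr (fun n => hIF (m, n))]
    simp only
    exact tsum_ite_eq m _
  rw [tsum_congr hdiag] at hkey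
  rw [← Complex.ofReal_tsum] at hkey
  rw [intervalIntegral.integral_ofReal] at hkey
  have hre := Complex.ofReal_injective hkey
  rw [hre, tsum_mul_left]

theorem ivory_identity (x : ℝ) (hx0 : 0 ≤ x) (hx1 : x ≤ 1) :
    (1 / Real.pi) *
        ∫ φ in (0:ℝ)..Real.pi, Real.sqrt (1 + 2 * Real.sqrt x * Real.cos (2 * φ) + x) =
      ∑' n : ℕ, ((1 / (2 * (n : ℝ) - 1)) * (1 / 4 ^ n) * (Nat.choose (2 * n) n)) ^ 2 * x ^ n := by
  have hy0 : 0 ≤ Real.sqrt x := Real.sqrt_nonneg x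
  have hy1 : Real.sqrt x ≤ 1 := by
    rw [show (1:ℝ) = Real.sqrt 1 by rw [Real.sqrt_one]]
    exact Real.sqrt_le_sqrt hx1
  have hxy : x = Real.sqrt x ^ 2 := (Real.sq_sqrt hx0).symm
  calc (1 / Real.pi) *
        ∫ φ in (0:ℝ)..Real.pi, Real.sqrt (1 + 2 * Real.sqrt x * Real.cos (2 * φ) + x)
      = (1 / Real.pi) *
        ∫ φ in (0:ℝ)..Real.pi, Real.sqrt (1 + 2 * Real.sqrt x * Real.cos (2 * φ) + Real.sqrt x ^ 2) := by
        rw [← hxy]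
    _ = (1 / Real.pi) * (π * ∑' n : ℕ, (iv n)^2 * (Real.sqrt x)^(2*n)) := by
        rw [ivory_aux _ hy0 hy1]
    _ = ∑' n : ℕ, (iv n)^2 * (Real.sqrt x)^(2*n) := by
        field_simp
    _ = ∑' n : ℕ, ((1 / (2 * (n : ℝ) - 1)) * (1 / 4 ^ n) * (Nat.choose (2 * n) n)) ^ 2 * x ^ n := by
        apply tsum_congr
        intro n
        rw [iv_coeff n, pow_mul, ← hxy]
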